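/- Let $\theta \ge 0$ be real and let $1 \le l \le n$ be integers with $l(l+\theta-1) > 0$. Then $\int_0^{\infty} q^{\theta}_{n,l}(t)\, dt = \frac{2}{l(l+\theta-1)}$. (This is the expected total time during which the ancestral process $A_n^{\theta}$ spends in state $l$.) -/

import Mathlib

open Finset MeasureTheory

/-- Rising factorial `x^{(m)} = x (x+1) ⋯ (x+m-1)` of a real number. -/
noncomputable def risingFac (x : ℝ) (m : ℕ) : ℝ := ∏ i ∈ Finset.range m, (x + i)

/-- Falling factorial `n^{[j]} = n (n-1) ⋯ (n-j+1)` of a natural number, as a real. -/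
noncomputable def fallingFac (n : ℕ) (j : ℕ) : ℝ := ∏ i ∈ Finset.range j, ((n : ℝ) - i)

/-- `q θ n k t = P(A_n^θ(t) = k)`. -/
noncomputable def q (θ : ℝ) (n k : ℕ) (t : ℝ) : ℝ :=
  ∑ j ∈ Finset.Icc k n,
    Real.exp (-(j * (j + θ - 1) * t) / 2) * (-1 : ℝ) ^ (j - k) *
      ((2 * j + θ - 1) * risingFac (k + θ) (j - 1)) /
        ((Nat.factorial k : ℝ) * (Nat.factorial (j - k) : ℝ)) *
      (fallingFac n j / risingFac (n + θ) j)


lemma risingFac_succ (x : ℝ) (m : ℕ) : risingFac x (m+1) = risingFac x m * (x + m) :=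
  Finset.prod_range_succ _ _

lemma risingFac_succ' (x : ℝ) (m : ℕ) : risingFac x (m+1) = risingFac (x+1) m * x := by
  rw [risingFac, Finset.prod_range_succ', risingFac]
  push_cast
  congr 1
  · exact Finset.prod_congr rfl fun i _ => by ring
  · ring

lemma fallingFac_succ (n m : ℕ) : fallingFac n (m+1) = fallingFac n m * ((n:ℝ) - m) :=
  Finset.prod_range_succ _ _

lemma fallingFac_succ_left (n m : ℕ) : fallingFac (n+1) (m+1) = ((n:ℝ)+1) * fallingFac n m := by
  rw [fallingFac, Finset.prod_range_succ', fallingFac]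
  push_cast
  rw [mul_comm]
  congr 1
  · ring
  · exact Finset.prod_congr rfl fun i _ => by ring

lemma fallingFac_self_succ (n : ℕ) : fallingFac n (n+1) = 0 :=
  Finset.prod_eq_zero (Finset.mem_range.2 (Nat.lt_succ_self n)) (by simp)

lemma fallingFac_self (n : ℕ) : fallingFac n n = n.factorial := by
  induction n with
  | zero => simp [fallingFac]
  | succ n ih => rw [fallingFac_succ_left, ih, Nat.factorial_succ]; push_cast; ring

lemma risingFac_pos {x : ℝ} (hx : 0 < x) (m : ℕ) : 0 < risingFac x m :=
  Finset.prod_pos fun i _ => by positivity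

lemma integral_exp_neg_mul_Ioi' {b : ℝ} (hb : 0 < b) :
    ∫ t in Set.Ioi (0:ℝ), Real.exp (-(b*t)) = 1/b := by
  have hderiv : ∀ x ∈ Set.Ici (0:ℝ),
      HasDerivAt (fun t => -Real.exp (-(b*t))/b) (Real.exp (-(b*x))) x := by
    intro x _
    have h1 : HasDerivAt (fun t : ℝ => -(b*t)) (-b) x := by
      simpa using ((hasDerivAt_id x).const_mul b).fun_neg
    have h2 := (h1.exp).fun_neg.div_const b
    rw [show Real.exp (-(b*x)) = -(Real.exp (-(b*x)) * -b) / b by field_simp]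
    exact h2
  have hint : IntegrableOn (fun t => Real.exp (-(b*t))) (Set.Ioi 0) := by
    simpa [neg_mul] using exp_neg_integrableOn_Ioi 0 hb
  have htend : Filter.Tendsto (fun t => -Real.exp (-(b*t))/b) Filter.atTop (nhds 0) := by
    have h1 : Filter.Tendsto (fun t : ℝ => b*t) Filter.atTop Filter.atTop :=
      Filter.Tendsto.const_mul_atTop hb Filter.tendsto_id
    have h2 : Filter.Tendsto (fun t : ℝ => Real.exp (-(b*t))) Filter.atTop (nhds 0) := by
      have := Real.tendsto_exp_neg_atTop_nhds_zero.comp h1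
      simpa [Function.comp_def] using this
    have := (h2.neg).div_const b
    simpa using this
  have := integral_Ioi_of_hasDerivAt_of_tendsto' hderiv hint htend
  rw [this]
  simp
  ring

set_option maxHeartbeats 1000000 in
lemma alg (A D P s F1 F2 M Dd N Th : ℝ)
    (hF1 : F1 ≠ 0) (hF2 : F2 ≠ 0) (hP : P ≠ 0) (hNT : N+Th ≠ 0)
    (h1 : N+1+Th+(M+Dd) ≠ 0) (h2 : N+1-(M+1) ≠ 0) (h3 : M+Dd+1 ≠ 0)
    (h4 : (M+Dd+1)+Th-1 ≠ 0) (h5 : Dd+1 ≠ 0) :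
    s * ((2*(M+Dd+1)+Th-1) * A) / (F1 * F2) * ((N+1)*D / (P*(N+1+Th+(M+Dd)))) *
        (1/((M+Dd+1)*((M+Dd+1)+Th-1)))
    = s * ((2*(M+Dd+1)+Th-1) * A) / (F1 * F2) * (D*(N-(M+Dd)) / (P*(N+Th))) *
        (1/((M+Dd+1)*((M+Dd+1)+Th-1)))
      + (s * Dd * A * D / (F1 * F2 * (N+1-(M+1)) * P * (N+Th))
        - (s * (-1)) * ((Dd+1) * (A*((M+1)+Th+(M+Dd))) * (D*(N-(M+Dd)))) /
            (F1 * ((Dd+1)*F2) * (N+1-(M+1)) * (P*(N+1+Th+(M+Dd)))* (N+Th))) := by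
  have hC : (M+Dd+1)*((M+Dd+1)+Th-1) ≠ 0 := mul_ne_zero h3 h4
  have hD1 : (F1*F2) * (P*(N+1+Th+(M+Dd))) * ((M+Dd+1)*((M+Dd+1)+Th-1)) ≠ 0 :=
    mul_ne_zero (mul_ne_zero (mul_ne_zero hF1 hF2) (mul_ne_zero hP h1)) hC
  have hD2 : (F1*F2) * (P*(N+Th)) * ((M+Dd+1)*((M+Dd+1)+Th-1)) ≠ 0 :=
    mul_ne_zero (mul_ne_zero (mul_ne_zero hF1 hF2) (mul_ne_zero hP hNT)) hC
  have hD3 : F1 * F2 * (N+1-(M+1)) * P * (N+Th) ≠ 0 :=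
    mul_ne_zero (mul_ne_zero (mul_ne_zero (mul_ne_zero hF1 hF2) h2) hP) hNT
  have hD4 : F1 * ((Dd+1)*F2) * (N+1-(M+1)) * (P*(N+1+Th+(M+Dd))) * (N+Th) ≠ 0 :=
    mul_ne_zero (mul_ne_zero (mul_ne_zero (mul_ne_zero hF1 (mul_ne_zero h5 hF2)) h2)
      (mul_ne_zero hP h1)) hNT
  rw [div_mul_div_comm, div_mul_div_comm, div_mul_div_comm, div_mul_div_comm,
    div_sub_div _ _ hD3 hD4, div_add_div _ _ hD2 (mul_ne_zero hD3 hD4),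
    div_eq_div_iff hD1 (mul_ne_zero hD2 (mul_ne_zero hD3 hD4))]
  ring

noncomputable def W (θ : ℝ) (l n : ℕ) (j : ℕ) : ℝ :=
  (-1:ℝ)^(j-l) * ((j-l : ℕ):ℝ) * risingFac ((l:ℝ)+θ) (j-1) * fallingFac n (j-1) /
    ((Nat.factorial l : ℝ) * (Nat.factorial (j-l) : ℝ) * ((n:ℝ)+1-(l:ℝ)) *
      risingFac ((n:ℝ)+1+θ) (j-1) * ((n:ℝ)+θ))

lemma W_left (θ : ℝ) (l n : ℕ) : W θ l n l = 0 := by simp [W]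

lemma W_top (θ : ℝ) (l n : ℕ) : W θ l n (n+2) = 0 := by
  simp [W, fallingFac_self_succ]

lemma sum_telescope_Icc (w : ℕ → ℝ) (l : ℕ) :
    ∀ m, l ≤ m → ∑ j ∈ Finset.Icc l m, (w j - w (j+1)) = w l - w (m+1) := by
  intro m hm
  induction m, hm using Nat.le_induction with
  | base => simp
  | succ n hn ih => rw [Finset.sum_Icc_succ_top (by omega), ih]; ring

set_option maxHeartbeats 2000000 in
lemma perterm (θ : ℝ) (hθ : 0 ≤ θ) (l n j : ℕ) (hl : 1 ≤ l) (hln : l ≤ n)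
    (hlj : l ≤ j) (hjn : j ≤ n+1) (hlθ : 0 < (l:ℝ)+θ-1) :
    (-1:ℝ)^(j-l) * ((2*j+θ-1) * risingFac ((l:ℝ)+θ) (j-1)) /
        ((Nat.factorial l : ℝ) * (Nat.factorial (j-l) : ℝ)) *
      (fallingFac (n+1) j / risingFac (((n+1:ℕ):ℝ) + θ) j) * (1/((j:ℝ)*((j:ℝ)+θ-1)))
    = (-1:ℝ)^(j-l) * ((2*j+θ-1) * risingFac ((l:ℝ)+θ) (j-1)) /
        ((Nat.factorial l : ℝ) * (Nat.factorial (j-l) : ℝ)) *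
      (fallingFac n j / risingFac ((n:ℝ) + θ) j) * (1/((j:ℝ)*((j:ℝ)+θ-1)))
      + (W θ l n j - W θ l n (j+1)) := by
  obtain ⟨m, rfl⟩ : ∃ m, l = m+1 := ⟨l-1, by omega⟩
  obtain ⟨d, rfl⟩ : ∃ d, j = m+d+1 := ⟨j-(m+1), by omega⟩
  have e1 : m+d+1-(m+1) = d := by omega
  have e2 : m+d+1-1 = m+d := by omega
  have e3 : m+d+1+1-(m+1) = d+1 := by omega
  have e4 : m+d+1+1-1 = m+d+1 := by omega
  simp only [W, e1, e2, e3, e4]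
  have hP : 0 < risingFac ((n:ℝ)+1+θ) (m+d) := risingFac_pos (by positivity) _
  have hnm : (m:ℝ) < (n:ℝ) := by exact_mod_cast (by omega : m < n)
  have hm0 : (0:ℝ) ≤ (m:ℝ) := by positivity
  have hd0 : (0:ℝ) ≤ (d:ℝ) := by positivity
  have hn1 : (0:ℝ) < (n:ℝ)+θ := by linarith
  have hmθ : (0:ℝ) < (m:ℝ)+θ := by push_cast at hlθ; linarith
  rw [fallingFac_succ_left n (m+d), fallingFac_succ n (m+d),
      risingFac_succ (((n+1:ℕ):ℝ)+θ) (m+d),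
      risingFac_succ' ((n:ℝ)+θ) (m+d),
      risingFac_succ ((((m+1):ℕ):ℝ)+θ) (m+d), risingFac_succ ((n:ℝ)+1+θ) (m+d),
      show (n:ℝ)+θ+1 = (n:ℝ)+1+θ by ring,
      show ((n+1:ℕ):ℝ)+θ = (n:ℝ)+1+θ by push_cast; ring,
      Nat.factorial_succ d, pow_succ]
  have hl' : ((Nat.factorial (m+1) : ℝ)) ≠ 0 := by
    exact_mod_cast (Nat.factorial_ne_zero (m+1))
  have hd' : ((Nat.factorial d : ℝ)) ≠ 0 := by
    exact_mod_cast (Nat.factorial_ne_zero d)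
  have h1 : ((n:ℝ)+1+θ+((m:ℝ)+(d:ℝ))) ≠ 0 := by positivity
  have h2 : ((n:ℝ)+1-((m:ℝ)+1)) ≠ 0 := by intro h; linarith [hnm]
  have h3 : ((m:ℝ)+(d:ℝ)+1) ≠ 0 := by positivity
  have h4 : ((m:ℝ)+(d:ℝ)+1)+θ-1 ≠ 0 := by intro h; linarith
  have h5 : ((d:ℝ)+1) ≠ 0 := by positivity
  push_cast
  linear_combination alg (risingFac ((m:ℝ)+1+θ) (m+d)) (fallingFac n (m+d))
    (risingFac ((n:ℝ)+1+θ) (m+d)) ((-1:ℝ)^d) ((Nat.factorial (m+1) : ℝ))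
    ((Nat.factorial d : ℝ)) (m:ℝ) (d:ℝ) (n:ℝ) θ hl' hd' hP.ne' (ne_of_gt hn1)
    h1 h2 h3 h4 h5

lemma sum_identity (θ : ℝ) (hθ : 0 ≤ θ) (l : ℕ) (hl : 1 ≤ l) (hlθ : 0 < (l:ℝ) + θ - 1)
    (n : ℕ) (hn : l ≤ n) :
    ∑ j ∈ Finset.Icc l n,
      ((-1:ℝ)^(j-l) * ((2*j+θ-1) * risingFac ((l:ℝ)+θ) (j-1)) /
        ((Nat.factorial l : ℝ) * (Nat.factorial (j-l) : ℝ)) *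
        (fallingFac n j / risingFac ((n:ℝ)+θ) j) * (1/((j:ℝ)*((j:ℝ)+θ-1))))
      = 1/((l:ℝ)*((l:ℝ)+θ-1)) := by
  induction n, hn using Nat.le_induction with
  | base =>
    rw [Finset.Icc_self, Finset.sum_singleton]
    obtain ⟨m, rfl⟩ : ∃ m, l = m+1 := ⟨l-1, by omega⟩
    simp only [Nat.sub_self, Nat.add_sub_cancel]
    rw [risingFac_succ, fallingFac_self]
    have hA : 0 < risingFac (((m+1:ℕ):ℝ)+θ) m := risingFac_pos (by positivity) m
    have hF : ((Nat.factorial (m+1) : ℝ)) ≠ 0 := by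
      exact_mod_cast (Nat.factorial_ne_zero (m+1))
    have h2l : (((m+1:ℕ):ℝ)+θ+(m:ℕ)) ≠ 0 := by positivity
    have hc : ((m+1:ℕ):ℝ) * (((m+1:ℕ):ℝ)+θ-1) ≠ 0 := by
      have h1 : (0:ℝ) < ((m+1:ℕ):ℝ) := by positivity
      push_cast at hlθ ⊢; nlinarith
    push_cast at hA hF h2l hc ⊢
    rw [pow_zero, one_mul, Nat.factorial_zero, Nat.cast_one, mul_one,
        div_mul_div_comm, div_mul_div_comm, div_eq_div_iff
          (mul_ne_zero (mul_ne_zero hF (mul_ne_zero hA.ne' h2l)) hc) hc]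
    ring
  | succ n hn ih =>
    have step : ∀ j ∈ Finset.Icc l (n+1),
        ((-1:ℝ)^(j-l) * ((2*j+θ-1) * risingFac ((l:ℝ)+θ) (j-1)) /
          ((Nat.factorial l : ℝ) * (Nat.factorial (j-l) : ℝ)) *
          (fallingFac (n+1) j / risingFac (((n+1:ℕ):ℝ)+θ) j) * (1/((j:ℝ)*((j:ℝ)+θ-1))))
        = ((-1:ℝ)^(j-l) * ((2*j+θ-1) * risingFac ((l:ℝ)+θ) (j-1)) /
          ((Nat.factorial l : ℝ) * (Nat.factorial (j-l) : ℝ)) *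
          (fallingFac n j / risingFac ((n:ℝ)+θ) j) * (1/((j:ℝ)*((j:ℝ)+θ-1))))
          + (W θ l n j - W θ l n (j+1)) := by
      intro j hj
      rw [Finset.mem_Icc] at hj
      exact perterm θ hθ l n j hl hn hj.1 hj.2 hlθ
    rw [Finset.sum_congr rfl step, Finset.sum_add_distrib,
        sum_telescope_Icc (W θ l n) l (n+1) (by omega), W_left,
        show n+1+1 = n+2 from rfl, W_top,
        Finset.sum_Icc_succ_top (by omega : l ≤ n+1), ih]
    simp [fallingFac_self_succ]

lemma integral_term (b C : ℝ) (hb : 0 < b) :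
    ∫ t in Set.Ioi (0:ℝ), Real.exp (-(b*t)) * C = (1/b) * C := by
  rw [MeasureTheory.integral_mul_const, integral_exp_neg_mul_Ioi' hb]


/-- The expected total time the ancestral process spends in state `l`:
`∫_0^∞ q^θ_{n,l}(t) dt = 2/(l(l+θ-1))`. -/
theorem stmt_9 (θ : ℝ) (hθ : 0 ≤ θ) (n l : ℕ) (hl : 1 ≤ l) (hln : l ≤ n)
    (hrate : 0 < (l : ℝ) * ((l : ℝ) + θ - 1)) :
    ∫ t in Set.Ioi (0:ℝ), q θ n l t = 2 / ((l : ℝ) * ((l : ℝ) + θ - 1)) := by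
  have hl0 : (0:ℝ) < (l:ℝ) := by exact_mod_cast hl
  have hlθ : 0 < (l:ℝ) + θ - 1 := by nlinarith
  set C : ℕ → ℝ := fun j => (-1:ℝ)^(j-l) * ((2*j+θ-1) * risingFac ((l:ℝ)+θ) (j-1)) /
      ((Nat.factorial l : ℝ) * (Nat.factorial (j-l) : ℝ)) *
      (fallingFac n j / risingFac ((n:ℝ)+θ) j) with hC
  have hc : ∀ j ∈ Finset.Icc l n, 0 < (j:ℝ)*((j:ℝ)+θ-1)/2 := by
    intro j hj
    rw [Finset.mem_Icc] at hj
    have h1 : (l:ℝ) ≤ (j:ℝ) := by exact_mod_cast hj.1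
    nlinarith
  have hq : ∀ t : ℝ, q θ n l t
      = ∑ j ∈ Finset.Icc l n, Real.exp (-(((j:ℝ)*((j:ℝ)+θ-1)/2)*t)) * C j := by
    intro t
    unfold q
    refine Finset.sum_congr rfl fun j _ => ?_
    rw [hC, show -((j:ℝ)*((j:ℝ)+θ-1)*t)/2 = -(((j:ℝ)*((j:ℝ)+θ-1)/2)*t) by ring]
    ring
  simp only [hq]
  rw [MeasureTheory.integral_finset_sum]
  · have heach : ∀ j ∈ Finset.Icc l n,
        (∫ t in Set.Ioi (0:ℝ), Real.exp (-(((j:ℝ)*((j:ℝ)+θ-1)/2)*t)) * C j)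
        = C j * (1/((j:ℝ)*((j:ℝ)+θ-1))) * 2 := by
      intro j hj
      rw [integral_term _ _ (hc j hj)]
      have hcj : ((j:ℝ)*((j:ℝ)+θ-1)) ≠ 0 := by
        have := hc j hj; intro h; rw [h] at this; norm_num at this
      field_simp
    rw [Finset.sum_congr rfl heach, ← Finset.sum_mul,
        sum_identity θ hθ l hl hlθ n hln]
    ring
  · intro j hj
    have := (exp_neg_integrableOn_Ioi 0 (hc j hj)).mul_const (C j)
    simpa [neg_mul] using this
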